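/- The intersection of the derived series of a free group is trivial: ⋂_{k≥0} Fₙ^{(k)} = {1}; likewise the intersection of the lower central series is trivial: ⋂_{k≥1} (Fₙ)_k = {1}. -/

import Mathlib

open Finset
open scoped commutatorElement

namespace MagnusAux

variable {α : Type*} [DecidableEq α]

/-- Noncommutative formal power series over ℤ in variables α, as coefficient functions. -/
def Mag (α : Type*) : Type _ := List α → ℤ

namespace Mag

instance : AddCommGroup (Mag α) := inferInstanceAs (AddCommGroup (List α → ℤ))

instance : One (Mag α) := ⟨fun w => if w = [] then 1 else 0⟩

instance : Mul (Mag α) :=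
  ⟨fun f g w => ∑ i ∈ range (w.length + 1), f (w.take i) * g (w.drop i)⟩

lemma mul_apply (f g : Mag α) (w : List α) :
    (f * g) w = ∑ i ∈ range (w.length + 1), f (w.take i) * g (w.drop i) := rfl

lemma one_apply (w : List α) : (1 : Mag α) w = if w = [] then 1 else 0 := rfl

lemma add_apply (f g : Mag α) (w : List α) : (f + g) w = f w + g w := rfl

lemma sub_apply (f g : Mag α) (w : List α) : (f - g) w = f w - g w := rfl

lemma zero_apply (w : List α) : (0 : Mag α) w = 0 := rfl

/-- triangle sum reindexing -/
lemma tri (N : ℕ) (F : ℕ → ℕ → ℤ) :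
    ∑ i ∈ range (N + 1), ∑ j ∈ range (i + 1), F i j
      = ∑ j ∈ range (N + 1), ∑ k ∈ range (N + 1 - j), F (j + k) j := by
  rw [Finset.sum_sigma', Finset.sum_sigma']
  refine Finset.sum_nbij' (fun p => ⟨p.2, p.1 - p.2⟩) (fun p => ⟨p.1 + p.2, p.1⟩)
    ?_ ?_ ?_ ?_ ?_
  · rintro ⟨i, j⟩ h
    simp only [mem_sigma, mem_range] at h ⊢
    omega
  · rintro ⟨j, k⟩ h
    simp only [mem_sigma, mem_range] at h ⊢
    omega
  · rintro ⟨i, j⟩ h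
    simp only [mem_sigma, mem_range] at h
    have e : j + (i - j) = i := by omega
    simp only [e]
  · rintro ⟨j, k⟩ h
    simp only [mem_sigma, mem_range] at h
    have e : j + k - j = k := by omega
    simp only [e]
  · rintro ⟨i, j⟩ h
    simp only [mem_sigma, mem_range] at h
    have e : j + (i - j) = i := by omega
    simp only [e]

lemma mul_assoc' (f g h : Mag α) : f * g * h = f * (g * h) := by
  funext w
  rw [mul_apply, mul_apply]
  set N := w.length with hN
  have L : ∀ i ∈ range (N + 1),
      (f * g) (w.take i) * h (w.drop i)
        = ∑ j ∈ range (i + 1), f (w.take j) * (g ((w.take i).drop j) * h (w.drop i)) := by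
    intro i hi
    rw [mem_range] at hi
    rw [mul_apply, Finset.sum_mul]
    have hlen : (w.take i).length = i := by
      rw [List.length_take]; omega
    rw [hlen]
    refine Finset.sum_congr rfl fun j hj => ?_
    rw [mem_range] at hj
    rw [List.take_take, min_eq_left (by omega), _root_.mul_assoc]
  rw [Finset.sum_congr rfl L]
  have Rr : ∀ j ∈ range (N + 1),
      f (w.take j) * (g * h) (w.drop j)
        = ∑ k ∈ range (N + 1 - j), f (w.take j) * (g ((w.take (j + k)).drop j) * h (w.drop (j + k))) := by
    intro j hj
    rw [mem_range] at hj
    rw [mul_apply, Finset.mul_sum]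
    have hlen : (w.drop j).length = N - j := by
      rw [List.length_drop]
    rw [hlen]
    have : N - j + 1 = N + 1 - j := by omega
    rw [this]
    refine Finset.sum_congr rfl fun k hk => ?_
    rw [mem_range] at hk
    have e1 : (w.take (j + k)).drop j = (w.drop j).take k := by
      rw [List.drop_take]
      congr 1
      omega
    have e2 : w.drop (j + k) = (w.drop j).drop k := by
      rw [List.drop_drop]
    rw [e1, e2]
  rw [Finset.sum_congr rfl Rr]
  exact tri N (fun i j => f (w.take j) * (g ((w.take i).drop j) * h (w.drop i)))

lemma one_mul' (f : Mag α) : 1 * f = f := by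
  funext w
  rw [mul_apply]
  rw [Finset.sum_eq_single 0]
  · simp [one_apply]
  · intro i hi hne
    rw [mem_range] at hi
    have : ¬ (w.take i = []) := by
      rw [List.take_eq_nil_iff]
      push_neg
      constructor
      · exact hne
      · intro h; subst h; simp at hi; omega
    simp [one_apply, this]
  · intro h
    simp at h

lemma mul_one' (f : Mag α) : f * 1 = f := by
  funext w
  rw [mul_apply]
  rw [Finset.sum_eq_single w.length]
  · simp [one_apply]
  · intro i hi hne
    rw [mem_range] at hi
    have : ¬ (w.drop i = []) := by
      rw [List.drop_eq_nil_iff]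
      omega
    simp [one_apply, this]
  · intro h
    simp at h

instance : Ring (Mag α) :=
  { (inferInstance : AddCommGroup (Mag α)),
    (inferInstance : One (Mag α)),
    (inferInstance : Mul (Mag α)) with
    mul_assoc := mul_assoc'
    one_mul := one_mul'
    mul_one := mul_one'
    left_distrib := fun f g h => by
      funext w
      simp only [mul_apply, add_apply, mul_add, Finset.sum_add_distrib]
    right_distrib := fun f g h => by
      funext w
      simp only [mul_apply, add_apply, add_mul, Finset.sum_add_distrib]
    zero_mul := fun f => by
      funext w
      simp [mul_apply, zero_apply]
    mul_zero := fun f => by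
      funext w
      simp [mul_apply, zero_apply] }

section Part2

/-- The variable X i. -/
def X (i : α) : Mag α := fun w => if w = [i] then 1 else 0

/-- The power series inverse of 1 + X i. -/
def geo (i : α) : Mag α :=
  fun w => if w = List.replicate w.length i then (-1) ^ w.length else 0

lemma X_mul_apply_nil (i : α) (f : Mag α) : (X i * f) [] = 0 := by
  simp [mul_apply, X]

lemma X_mul_apply_cons (i : α) (f : Mag α) (a : α) (t : List α) :
    (X i * f) (a :: t) = if a = i then f t else 0 := by
  rw [mul_apply, Finset.sum_eq_single 1]
  · simp only [List.take_cons, List.take_zero, List.drop_succ_cons, List.drop_zero, X]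
    by_cases h : a = i <;> simp [h]
  · intro k hk hne
    simp only [mem_range, List.length_cons] at hk
    have hz : ¬ ((a :: t).take k = [i]) := by
      intro h
      have hlen := congrArg List.length h
      rw [List.length_take] at hlen
      simp only [List.length_cons] at hlen
      have : min k (t.length + 1) = 1 := by simpa using hlen
      omega
    simp [X, hz]
  · intro h; simp at h

lemma mul_X_apply (i : α) (f : Mag α) (w : List α) :
    (f * X i) w = if w.getLast? = some i then f w.dropLast else 0 := by
  rcases List.eq_nil_or_concat w with rfl | ⟨u, a, rfl⟩
  · simp only [mul_apply]
    simp [X]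
  · rw [List.concat_eq_append, mul_apply, Finset.sum_eq_single u.length]
    · rw [List.take_left, List.drop_left, List.getLast?_concat, List.dropLast_concat]
      simp only [X]
      by_cases h : a = i
      · subst h; simp
      · have h1 : ¬ ([a] = [i]) := by simpa using h
        have h2 : ¬ (some a = some i) := by simpa using h
        simp [h1, h2]
    · intro k hk hne
      simp only [mem_range, List.length_append, List.length_singleton] at hk
      have hlen : (u ++ [a]).length = u.length + 1 := by simp
      have hz : ¬ ((u ++ [a]).drop k = [i]) := by
        intro h
        have := congrArg List.length h
        simp only [List.length_drop, hlen] at this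
        have : u.length + 1 - k = 1 := by simpa using this
        omega
      simp [X, hz]
    · intro h
      rw [mem_range] at h
      simp only [List.length_append, List.length_singleton] at h
      omega

lemma one_add_X_mul_geo (i : α) : (1 + X i) * geo i = 1 := by
  funext w
  rw [add_mul, one_mul, add_apply]
  match w with
  | [] => rw [X_mul_apply_nil]; simp [geo, one_apply]
  | a :: t =>
    rw [X_mul_apply_cons]
    have hone : (1 : Mag α) (a :: t) = 0 := by simp [one_apply]
    rw [hone]
    by_cases h : a = i
    · subst h
      rw [if_pos rfl]
      by_cases ht : t = List.replicate t.length a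
      · have h1 : geo a (a :: t) = (-1) ^ (t.length + 1) := by
          rw [geo, if_pos]
          · simp
          · simp only [List.length_cons, List.replicate_succ]
            rw [← ht]
        have h2 : geo a t = (-1) ^ t.length := by
          rw [geo, if_pos (by rw [← ht])]
        rw [h1, h2, pow_succ]
        ring
      · have h1 : geo a (a :: t) = 0 := by
          rw [geo, if_neg]
          intro hc
          simp only [List.length_cons, List.replicate_succ, List.cons.injEq] at hc
          exact ht hc.2
        have h2 : geo a t = 0 := by
          rw [geo, if_neg (by intro hc; exact ht hc)]
        rw [h1, h2]; ring
    · have h1 : geo i (a :: t) = 0 := by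
        rw [geo, if_neg]
        intro hc
        simp only [List.length_cons, List.replicate_succ, List.cons.injEq] at hc
        exact h hc.1
      rw [h1, if_neg h]
      ring

lemma geo_mul_one_add_X (i : α) : geo i * (1 + X i) = 1 := by
  funext w
  rw [mul_add, mul_one, add_apply, mul_X_apply]
  rcases List.eq_nil_or_concat w with rfl | ⟨u, a, rfl⟩
  · simp [geo, one_apply]
  · rw [List.concat_eq_append]
    have hone : (1 : Mag α) (u ++ [a]) = 0 := by simp [one_apply]
    rw [hone, List.getLast?_concat, List.dropLast_concat]
    have hlen : (u ++ [a]).length = u.length + 1 := by simp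
    by_cases h : a = i
    · subst h
      rw [if_pos rfl]
      by_cases hu : u = List.replicate u.length a
      · have h1 : geo a (u ++ [a]) = (-1) ^ (u.length + 1) := by
          rw [geo, if_pos, hlen]
          rw [hlen, List.replicate_succ']
          rw [← hu]
        have h2 : geo a u = (-1) ^ u.length := by
          rw [geo, if_pos (by rw [← hu])]
        rw [h1, h2, pow_succ]; ring
      · have h1 : geo a (u ++ [a]) = 0 := by
          rw [geo, if_neg]
          intro hc
          rw [hlen, List.replicate_succ'] at hc
          exact hu (by simpa using hc)
        have h2 : geo a u = 0 := by
          rw [geo, if_neg (by intro hc; exact hu hc)]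
        rw [h1, h2]; ring
    · have h1 : geo i (u ++ [a]) = 0 := by
        rw [geo, if_neg]
        intro hc
        rw [hlen, List.replicate_succ'] at hc
        have := (List.append_inj' hc rfl).2
        simp only [List.cons.injEq] at this
        exact h this.1
      rw [h1, if_neg (by simpa using h)]
      ring

/-- The unit 1 + X i of the Magnus ring. -/
def U (i : α) : (Mag α)ˣ :=
  ⟨1 + X i, geo i, one_add_X_mul_geo i, geo_mul_one_add_X i⟩

/-- The k-th term of the filtration by order: coefficients vanish below length k. -/
def Dk (k : ℕ) (f : Mag α) : Prop := ∀ w : List α, w.length < k → f w = 0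

lemma Dk.mono {j k : ℕ} (h : j ≤ k) {f : Mag α} (hf : Dk k f) : Dk j f :=
  fun w hw => hf w (lt_of_lt_of_le hw h)

lemma Dk.zero (k : ℕ) : Dk k (0 : Mag α) := fun _ _ => rfl

lemma Dk.add {k : ℕ} {f g : Mag α} (hf : Dk k f) (hg : Dk k g) : Dk k (f + g) := by
  intro w hw
  rw [add_apply, hf w hw, hg w hw, add_zero]

lemma Dk.neg {k : ℕ} {f : Mag α} (hf : Dk k f) : Dk k (-f) := by
  intro w hw
  show -(f w) = 0
  rw [hf w hw, neg_zero]

lemma Dk.sub {k : ℕ} {f g : Mag α} (hf : Dk k f) (hg : Dk k g) : Dk k (f - g) := by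
  intro w hw
  rw [sub_apply, hf w hw, hg w hw, sub_zero]

lemma Dk.mul {j k : ℕ} {f g : Mag α} (hf : Dk j f) (hg : Dk k g) : Dk (j + k) (f * g) := by
  intro w hw
  rw [mul_apply]
  apply Finset.sum_eq_zero
  intro m hm
  rw [mem_range] at hm
  by_cases hmj : m < j
  · have : (w.take m).length < j := by
      rw [List.length_take]
      omega
    rw [hf _ this, zero_mul]
  · have : (w.drop m).length < k := by
      rw [List.length_drop]
      omega
    rw [hg _ this, mul_zero]

lemma Dk.mul_left {k : ℕ} (f : Mag α) {g : Mag α} (hg : Dk k g) : Dk k (f * g) := by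
  have := Dk.mul (j := 0) (f := f) (fun _ h => absurd h (Nat.not_lt_zero _)) hg
  simpa using this

lemma Dk.mul_right {k : ℕ} {f : Mag α} (hf : Dk k f) (g : Mag α) : Dk k (f * g) := by
  have := Dk.mul (k := 0) (g := g) hf (fun _ h => absurd h (Nat.not_lt_zero _))
  simpa using this

/-- The congruence subgroups of the unit group. -/
def HU (α : Type*) [DecidableEq α] (k : ℕ) : Subgroup (Mag α)ˣ where
  carrier := {u | Dk k ((u : Mag α) - 1)}
  one_mem' := by
    show Dk k ((1 : Mag α) - 1)
    rw [sub_self]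
    exact Dk.zero k
  mul_mem' := by
    intro u v hu hv
    show Dk k ((↑(u * v) : Mag α) - 1)
    have key : (↑(u * v) : Mag α) - 1
        = ((u : Mag α) - 1) * ((v : Mag α) - 1) + ((u : Mag α) - 1) + ((v : Mag α) - 1) := by
      rw [Units.val_mul]
      noncomm_ring
    rw [key]
    exact ((Dk.mul_left _ hv).add hu).add hv
  inv_mem' := by
    intro u hu
    show Dk k ((↑u⁻¹ : Mag α) - 1)
    have key : (↑u⁻¹ : Mag α) - 1 = (↑u⁻¹ : Mag α) * (1 - (u : Mag α)) := by
      rw [mul_sub, mul_one, Units.inv_mul]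
    rw [key]
    apply Dk.mul_left
    have := Dk.neg hu
    rwa [neg_sub] at this

lemma mem_HU {k : ℕ} {u : (Mag α)ˣ} : u ∈ HU α k ↔ Dk k ((u : Mag α) - 1) := Iff.rfl

lemma commutator_mem_HU {j k : ℕ} {u v : (Mag α)ˣ} (hu : u ∈ HU α j) (hv : v ∈ HU α k) :
    ⁅u, v⁆ ∈ HU α (j + k) := by
  rw [mem_HU] at hu hv ⊢
  have e2 : ((u : Mag α) - 1) * ((v : Mag α) - 1) - ((v : Mag α) - 1) * ((u : Mag α) - 1)
      = (u : Mag α) * v - (v : Mag α) * u := by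
    noncomm_ring
  have e1 : ((u : Mag α) * v - (v : Mag α) * u) * ((↑u⁻¹ : Mag α) * ↑v⁻¹)
      = (u : Mag α) * v * ↑u⁻¹ * ↑v⁻¹ - 1 := by
    rw [sub_mul]
    congr 1
    · rw [← mul_assoc]
    · rw [mul_assoc (v : Mag α), Units.mul_inv_cancel_left, Units.mul_inv]
  have key : (↑⁅u, v⁆ : Mag α) - 1
      = (((u : Mag α) - 1) * ((v : Mag α) - 1) - ((v : Mag α) - 1) * ((u : Mag α) - 1))
        * ((↑u⁻¹ : Mag α) * (↑v⁻¹ : Mag α)) := by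
    rw [e2, e1, commutatorElement_def, Units.val_mul, Units.val_mul, Units.val_mul]
  rw [key]
  exact Dk.mul_right ((hu.mul hv).sub (by rw [Nat.add_comm] at *; exact hv.mul hu)) _

/-- Supported on powers of the single letter i. -/
def RepOnly (i : α) (f : Mag α) : Prop :=
  ∀ w : List α, f w ≠ 0 → w = List.replicate w.length i

/-- Vanishing above degree m. -/
def DegLE (m : ℕ) (f : Mag α) : Prop := ∀ w : List α, m < w.length → f w = 0

lemma RepOnly.one (i : α) : RepOnly i (1 : Mag α) := by
  intro w hw
  rw [one_apply] at hw
  by_cases h : w = []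
  · subst h; rfl
  · simp [h] at hw

lemma RepOnly.mul {i : α} {f g : Mag α} (hf : RepOnly i f) (hg : RepOnly i g) :
    RepOnly i (f * g) := by
  intro w hw
  rw [mul_apply] at hw
  obtain ⟨k, hk, hne⟩ := Finset.exists_ne_zero_of_sum_ne_zero hw
  rw [mem_range] at hk
  have h1 : f (w.take k) ≠ 0 := fun h => hne (by rw [h, zero_mul])
  have h2 : g (w.drop k) ≠ 0 := fun h => hne (by rw [h, mul_zero])
  have e1 := hf _ h1
  have e2 := hg _ h2
  conv_lhs => rw [← List.take_append_drop k w]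
  rw [e1, e2, List.length_take, List.length_drop, ← List.replicate_add]
  congr 1
  omega

lemma RepOnly.pow {i : α} {f : Mag α} (hf : RepOnly i f) (m : ℕ) : RepOnly i (f ^ m) := by
  induction m with
  | zero => rw [pow_zero]; exact RepOnly.one i
  | succ m ih => rw [pow_succ]; exact ih.mul hf

lemma DegLE.one : DegLE 0 (1 : Mag α) := by
  intro w hw
  rw [one_apply, if_neg]
  intro h
  subst h
  simp at hw

lemma DegLE.mul {j k : ℕ} {f g : Mag α} (hf : DegLE j f) (hg : DegLE k g) :
    DegLE (j + k) (f * g) := by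
  intro w hw
  rw [mul_apply]
  apply Finset.sum_eq_zero
  intro m hm
  rw [mem_range] at hm
  by_cases hmj : j < m
  · have : j < (w.take m).length := by rw [List.length_take]; omega
    rw [hf _ this, zero_mul]
  · have : k < (w.drop m).length := by rw [List.length_drop]; omega
    rw [hg _ this, mul_zero]

lemma DegLE.pow {f : Mag α} (hf : DegLE 1 f) (m : ℕ) : DegLE m (f ^ m) := by
  induction m with
  | zero => rw [pow_zero]; exact DegLE.one
  | succ m ih =>
    rw [pow_succ]
    exact ih.mul hf

lemma one_add_X_repOnly (i : α) : RepOnly i (1 + X i : Mag α) := by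
  intro w hw
  rw [add_apply] at hw
  by_cases h : w = []
  · subst h; rfl
  · by_cases h1 : w = [i]
    · subst h1; rfl
    · rw [one_apply, if_neg h] at hw
      rw [X, if_neg h1] at hw
      simp at hw

lemma geo_repOnly (i : α) : RepOnly i (geo i : Mag α) := by
  intro w hw
  rw [geo] at hw
  by_cases h : w = List.replicate w.length i
  · exact h
  · rw [if_neg h] at hw; simp at hw

lemma one_add_X_degLE (i : α) : DegLE 1 (1 + X i : Mag α) := by
  intro w hw
  have h0 : ¬ (w = []) := by intro h; subst h; simp at hw
  have h1 : ¬ (w = [i]) := by intro h; subst h; simp at hw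
  rw [add_apply, one_apply, if_neg h0, X, if_neg h1, add_zero]

lemma pow_one_add_X_top (i : α) (m : ℕ) :
    ((1 + X i : Mag α) ^ m) (List.replicate m i) = 1 := by
  induction m with
  | zero => rw [pow_zero]; simp [one_apply]
  | succ m ih =>
    rw [pow_succ, mul_add, mul_one, add_apply, mul_X_apply]
    have hdeg : ((1 + X i : Mag α) ^ m) (List.replicate (m + 1) i) = 0 := by
      apply (one_add_X_degLE i).pow
      simp
    rw [hdeg, List.getLast?_replicate, if_neg (Nat.succ_ne_zero m), if_pos rfl]
    have hdl : (List.replicate (m + 1) i).dropLast = List.replicate m i := by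
      rw [List.replicate_succ', List.dropLast_concat]
    rw [hdl, ih, zero_add]

lemma geo_pow_pos (i : α) : ∀ (m : ℕ), 1 ≤ m → ∀ (k : ℕ),
    0 < (-1 : ℤ) ^ k * ((geo i : Mag α) ^ m) (List.replicate k i) := by
  intro m
  induction m with
  | zero => intro h; omega
  | succ m ih =>
    intro _ k
    by_cases hm : 1 ≤ m
    · rw [pow_succ, mul_apply]
      have hlen : (List.replicate k i).length = k := List.length_replicate
      rw [hlen, Finset.mul_sum]
      apply Finset.sum_pos
      · intro j hj
        rw [mem_range] at hj
        have ht : (List.replicate k i).take j = List.replicate j i := by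
          rw [List.take_replicate]
          congr 1
          omega
        have hd : (List.replicate k i).drop j = List.replicate (k - j) i := by
          rw [List.drop_replicate]
        rw [ht, hd]
        have e : (-1 : ℤ) ^ k = (-1) ^ j * (-1) ^ (k - j) := by
          rw [← pow_add]
          congr 1
          omega
        rw [e]
        have arrange : (-1 : ℤ) ^ j * (-1) ^ (k - j)
              * (((geo i : Mag α) ^ m) (List.replicate j i) * geo i (List.replicate (k - j) i))
            = ((-1 : ℤ) ^ j * ((geo i : Mag α) ^ m) (List.replicate j i))
              * ((-1 : ℤ) ^ (k - j) * geo i (List.replicate (k - j) i)) := by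
          ring
        rw [arrange]
        apply mul_pos (ih hm j)
        have : geo i (List.replicate (k - j) i) = (-1) ^ (k - j) := by
          rw [geo, List.length_replicate, if_pos rfl]
        rw [this]
        exact mul_self_pos.mpr (pow_ne_zero _ (by norm_num))
      · exact nonempty_range_add_one
    · have hm0 : m = 0 := by omega
      subst hm0
      rw [pow_one]
      have : geo i (List.replicate k i) = (-1) ^ k := by
        rw [geo, List.length_replicate, if_pos rfl]
      rw [this]
      exact mul_self_pos.mpr (pow_ne_zero _ (by norm_num))

/-- The basic block unit. -/
def Bunit (p : α × Bool) : (Mag α)ˣ := bif p.2 then U p.1 else (U p.1)⁻¹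

lemma Bunit_pow_repOnly (p : α × Bool) (m : ℕ) :
    RepOnly p.1 ((↑(Bunit p ^ m) : Mag α)) := by
  rw [Units.val_pow_eq_pow_val]
  cases hb : p.2
  · have : (↑(Bunit p) : Mag α) = geo p.1 := by
      rw [Bunit, hb]
      rfl
    rw [this]
    exact (geo_repOnly p.1).pow m
  · have : (↑(Bunit p) : Mag α) = 1 + X p.1 := by
      rw [Bunit, hb]
      rfl
    rw [this]
    exact (one_add_X_repOnly p.1).pow m

lemma Bunit_pow_top (p : α × Bool) (m : ℕ) :
    (↑(Bunit p ^ m) : Mag α) (List.replicate m p.1) ≠ 0 := by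
  rw [Units.val_pow_eq_pow_val]
  cases hb : p.2
  · have hv : (↑(Bunit p) : Mag α) = geo p.1 := by rw [Bunit, hb]; rfl
    rw [hv]
    rcases Nat.eq_zero_or_pos m with rfl | hm
    · rw [pow_zero]
      simp [one_apply]
    · have := geo_pow_pos p.1 m hm m
      intro h
      rw [h, mul_zero] at this
      exact lt_irrefl 0 this
  · have hv : (↑(Bunit p) : Mag α) = 1 + X p.1 := by rw [Bunit, hb]; rfl
    rw [hv, pow_one_add_X_top]
    exact one_ne_zero

lemma U_mem_HU_one (i : α) : U i ∈ HU α 1 := by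
  rw [mem_HU]
  intro w hw
  have hw0 : w = [] := by
    rw [Nat.lt_one_iff] at hw
    exact List.length_eq_zero_iff.mp hw
  subst hw0
  show ((1 + X i : Mag α) - 1) [] = 0
  rw [sub_apply, add_apply, one_apply, X]
  simp

/-- The Magnus series of a word. -/
def TT (L : List (α × Bool)) : (Mag α)ˣ := (L.map Bunit).prod

/-- No cancelling adjacent pair. -/
def Rred : (α × Bool) → (α × Bool) → Prop := fun a b => a.1 = b.1 → a.2 = b.2

lemma key_nil :
    ((↑(TT ([] : List (α × Bool))) : Mag α) (([] : List (α × Bool)).map Prod.fst) ≠ 0 ∧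
     ∀ (v : List α) (c : α), (∀ p ∈ ([] : List (α × Bool)).head?, c ≠ p.1) →
       (↑(TT ([] : List (α × Bool))) : Mag α) (v ++ c :: ([] : List (α × Bool)).map Prod.fst) = 0) := by
  constructor
  · show (1 : Mag α) [] ≠ 0
    rw [one_apply, if_pos rfl]
    exact one_ne_zero
  · intro v c _
    show (1 : Mag α) (v ++ [c]) = 0
    rw [one_apply, if_neg (by simp)]

lemma key (N : ℕ) : ∀ (L : List (α × Bool)), L.length ≤ N → List.Chain' Rred L →
    ((↑(TT L) : Mag α) (L.map Prod.fst) ≠ 0 ∧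
     ∀ (v : List α) (c : α), (∀ p ∈ L.head?, c ≠ p.1) →
       (↑(TT L) : Mag α) (v ++ c :: L.map Prod.fst) = 0) := by
  induction N with
  | zero =>
    intro L hlen _
    have hL : L = [] := List.length_eq_zero_iff.mp (Nat.le_zero.mp hlen)
    subst hL
    exact key_nil
  | succ N IH =>
    intro L hlen hchain
    match L, hlen, hchain with
    | [], _, _ => exact key_nil
    | hd :: tl, hlen, hchain =>
    set L' : List (α × Bool) := hd :: tl with hL'
    set p : α × Bool := hd with hp
    set i : α := p.1 with hi
    set t : List (α × Bool) := L'.takeWhile (fun q => q == p) with hT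
    set L₂ : List (α × Bool) := L'.dropWhile (fun q => q == p) with hL2
    set m : ℕ := t.length with hm
    have hsplit : t ++ L₂ = L' := List.takeWhile_append_dropWhile
    have hrep : t = List.replicate m p := by
      rw [List.eq_replicate_iff]
      refine ⟨rfl, fun b hb => ?_⟩
      have := List.mem_takeWhile_imp hb
      simpa [beq_iff_eq] using this
    have hm1 : 1 ≤ m := by
      have ht1 : t = hd :: tl.takeWhile (fun q => q == p) := by
        rw [hT, hL', List.takeWhile_cons_of_pos (by simp [hp])]
      rw [hm, ht1]
      simp
    have hq1 : ∀ q ∈ L₂.head?, q.1 ≠ i := by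
      intro q hql
      have hqp : ¬ (q = p) := by
        have h5 := List.head?_dropWhile_not (fun q => q == p) L'
        rw [← hL2] at h5
        rw [Option.mem_def] at hql
        rw [hql] at h5
        simpa [beq_iff_eq] using h5
      have hrel : Rred p q := by
        have hch : List.Chain' Rred (t ++ L₂) := by rw [hsplit]; exact hchain
        simp only [List.Chain'] at hch; rw [List.isChain_append] at hch
        apply hch.2.2 p _ q hql
        rw [hrep, List.getLast?_replicate, if_neg (by omega)]
        rfl
      intro hq1i
      apply hqp
      have h2 : p.2 = q.2 := hrel hq1i.symm
      exact Prod.ext hq1i h2.symm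
    have hchain₂ : List.Chain' Rred L₂ := by
      have hch : List.Chain' Rred (t ++ L₂) := by rw [hsplit]; exact hchain
      simp only [List.Chain'] at hch; rw [List.isChain_append] at hch
      exact hch.2.1
    have hlen₂ : L₂.length ≤ N := by
      have h := congrArg List.length hsplit
      rw [List.length_append] at h
      have h2 : L'.length ≤ N + 1 := hlen
      omega
    obtain ⟨IH1, IH2⟩ := IH L₂ hlen₂ hchain₂
    set M₂ : List α := L₂.map Prod.fst with hM2
    have hTT : (↑(TT L') : Mag α) = (↑(Bunit p ^ m) : Mag α) * (↑(TT L₂) : Mag α) := by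
      rw [TT, ← hsplit, List.map_append, List.prod_append, Units.val_mul, hrep]
      congr 2
      rw [List.map_replicate, List.prod_replicate]
    set A : Mag α := (↑(Bunit p ^ m) : Mag α) with hA
    set T₂ : Mag α := (↑(TT L₂) : Mag α) with hT2
    have hMdecomp : L'.map Prod.fst = List.replicate m i ++ M₂ := by
      rw [← hsplit, List.map_append, hrep, List.map_replicate]
    have hrepl_chop : List.replicate (m - 1) i ++ i :: M₂ = List.replicate m i ++ M₂ := by
      rw [← List.singleton_append, ← List.append_assoc, ← List.replicate_succ']
      congr 2
      omega
    have hq1' : ∀ q ∈ L₂.head?, i ≠ q.1 := fun q hq => (hq1 q hq).symm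
    constructor
    · -- main coefficient is nonzero
      rw [hTT, hMdecomp, mul_apply]
      rw [Finset.sum_eq_single m]
      · have h1 : (List.replicate m i ++ M₂).take m = List.replicate m i := by
          rw [List.take_append, List.take_replicate, min_self,
            List.length_replicate, Nat.sub_self, List.take_zero, List.append_nil]
        have h2 : (List.replicate m i ++ M₂).drop m = M₂ := by
          rw [List.drop_append, List.drop_replicate, Nat.sub_self,
            List.length_replicate, Nat.sub_self, List.replicate_zero, List.drop_zero,
            List.nil_append]
        rw [h1, h2]
        exact mul_ne_zero (Bunit_pow_top p m) IH1
      · intro k hk hkm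
        simp only [mem_range, List.length_append, List.length_replicate] at hk
        by_cases hA0 : A ((List.replicate m i ++ M₂).take k) = 0
        · rw [hA0, zero_mul]
        · have hrepk : (List.replicate m i ++ M₂).take k
              = List.replicate ((List.replicate m i ++ M₂).take k).length i :=
            Bunit_pow_repOnly p m _ hA0
          have hklen : ((List.replicate m i ++ M₂).take k).length = k := by
            rw [List.length_take, List.length_append, List.length_replicate]
            omega
          rw [hklen] at hrepk
          by_cases hkm' : k < m
          · have hd2 : (List.replicate m i ++ M₂).drop k
                = List.replicate (m - k) i ++ M₂ := by
              rw [List.drop_append, List.drop_replicate,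
                List.length_replicate]
              rw [Nat.sub_eq_zero_of_le (le_of_lt hkm'), List.drop_zero]
            have hd3 : List.replicate (m - k) i ++ M₂
                = List.replicate (m - k - 1) i ++ i :: M₂ := by
              rw [← List.singleton_append, ← List.append_assoc, ← List.replicate_succ']
              congr 2
              omega
            rw [hd2, hd3, IH2 _ _ hq1', mul_zero]
          · -- k > m is impossible
            exfalso
            have hkm2 : m < k := by omega
            have hM2len : 1 ≤ M₂.length := by omega
            have hL2ne : L₂ ≠ [] := by
              intro h
              rw [h] at hM2
              rw [hM2] at hM2len
              simp at hM2len
            obtain ⟨q, L₃, hq⟩ := List.exists_cons_of_ne_nil hL2ne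
            have e1 : (List.replicate m i ++ M₂).take k
                = List.replicate m i ++ M₂.take (k - m) := by
              rw [List.take_append, List.take_replicate,
                min_eq_right (le_of_lt hkm2), List.length_replicate]
            have h5 : List.replicate m i ++ M₂.take (k - m) = List.replicate k i := by
              rw [← e1]
              exact hrepk
            have h6 := congrArg (List.drop m) h5
            rw [List.drop_append, List.drop_replicate, Nat.sub_self,
              List.replicate_zero, List.nil_append, List.length_replicate, Nat.sub_self,
              List.drop_zero, List.drop_replicate] at h6
            rw [hM2, hq] at h6
            have h7 : k - m = (k - m - 1) + 1 := by omega
            rw [h7, List.replicate_succ] at h6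
            have h8 : (q :: L₃).map Prod.fst = q.1 :: L₃.map Prod.fst := rfl
            rw [h8, List.take_succ_cons] at h6
            injection h6 with h6a _
            exact hq1 q (by rw [hq]; rfl) h6a
      · intro hmem
        exfalso
        apply hmem
        rw [mem_range, List.length_append, List.length_replicate]
        omega
    · -- vanishing on longer prefixed words
      intro v c hc
      have hci : c ≠ i := hc p rfl
      rw [hTT, hMdecomp, mul_apply]
      apply Finset.sum_eq_zero
      intro k hk
      set W : List α := v ++ c :: (List.replicate m i ++ M₂) with hW
      simp only [mem_range] at hk
      by_cases hA0 : A (W.take k) = 0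
      · rw [hA0, zero_mul]
      · have hrepk : W.take k = List.replicate (W.take k).length i :=
          Bunit_pow_repOnly p m _ hA0
        have hkW : k ≤ W.length := by omega
        have hklen : (W.take k).length = k := by
          rw [List.length_take]
          omega
        rw [hklen] at hrepk
        have hkv : k ≤ v.length := by
          by_contra hgt
          push_neg at hgt
          have h9 : W.drop v.length = c :: (List.replicate m i ++ M₂) := by
            rw [hW, List.drop_append, List.drop_length, Nat.sub_self,
              List.drop_zero, List.nil_append]
          have h8 : List.drop v.length (List.replicate k i)
              = List.take (k - v.length) (W.drop v.length) := by
            rw [← hrepk, List.drop_take]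
          rw [h9, List.drop_replicate] at h8
          have h7 : k - v.length = (k - v.length - 1) + 1 := by omega
          rw [h7, List.take_succ_cons, List.replicate_succ] at h8
          injection h8 with h8a _
          exact hci h8a.symm
        have hassoc : (v.drop k ++ c :: List.replicate (m - 1) i) ++ i :: M₂
            = v.drop k ++ c :: (List.replicate m i ++ M₂) := by
          rw [List.append_assoc, List.cons_append, hrepl_chop]
        have hd2 : W.drop k = (v.drop k ++ c :: List.replicate (m - 1) i) ++ i :: M₂ := by
          rw [hW, List.drop_append, Nat.sub_eq_zero_of_le hkv, List.drop_zero,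
            hassoc]
        rw [hd2, IH2 _ _ hq1', mul_zero]

lemma not_chain'_decomp :
    ∀ (L : List (α × Bool)), ¬ List.Chain' Rred L →
      ∃ (L₂ : List (α × Bool)) (x : α) (b : Bool) (L₃ : List (α × Bool)),
        L = L₂ ++ (x, b) :: (x, !b) :: L₃ := by
  intro L
  induction L with
  | nil => intro h; exact absurd List.isChain_nil h
  | cons a L ih =>
    intro h
    match L, ih, h with
    | [], _, h => exact absurd (List.isChain_singleton a) h
    | b :: L', ih, h =>
      simp only [List.Chain'] at h; rw [List.isChain_cons_cons] at h
      by_cases hr : Rred a b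
      · have h2 : ¬ List.Chain' Rred (b :: L') := fun hc => h ⟨hr, hc⟩
        obtain ⟨L₂, x, bb, L₃, he⟩ := ih h2
        exact ⟨a :: L₂, x, bb, L₃, by rw [List.cons_append, ← he]⟩
      · rw [Rred] at hr
        push_neg at hr
        obtain ⟨h1, h2⟩ := hr
        refine ⟨[], a.1, a.2, L', ?_⟩
        have hb : b = (a.1, !a.2) := by
          have : b.2 = !a.2 := by
            cases ha2 : a.2 <;> cases hb2 : b.2 <;> simp_all
          exact Prod.ext h1.symm this
        rw [List.nil_append, ← hb]

lemma chain'_of_reduced (L : List (α × Bool)) (h : FreeGroup.reduce L = L) :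
    List.Chain' Rred L := by
  by_contra hc
  obtain ⟨L₂, x, b, L₃, hdecomp⟩ := not_chain'_decomp L hc
  exact FreeGroup.reduce.not (by rw [h]; exact hdecomp)

/-- The Magnus homomorphism. -/
def phi (α : Type*) [DecidableEq α] : FreeGroup α →* (Mag α)ˣ :=
  FreeGroup.lift (fun i => U i)

lemma phi_toWord (x : FreeGroup α) : phi α x = TT x.toWord := by
  conv_lhs => rw [← FreeGroup.mk_toWord (x := x)]
  rw [phi, FreeGroup.lift_mk]
  rfl

lemma phi_eq_one (x : FreeGroup α) (h : phi α x = 1) : x = 1 := by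
  by_contra hne
  have hred : FreeGroup.reduce x.toWord = x.toWord := FreeGroup.reduce_toWord x
  have hchain := chain'_of_reduced _ hred
  obtain ⟨h1, _⟩ := key x.toWord.length x.toWord le_rfl hchain
  apply h1
  have hT : TT x.toWord = 1 := by rw [← phi_toWord, h]
  rw [hT]
  have hne' : x.toWord ≠ [] := fun hn => hne (FreeGroup.toWord_eq_nil_iff.mp hn)
  show (1 : Mag α) _ = 0
  rw [one_apply, if_neg]
  intro hcon
  exact hne' (List.map_eq_nil_iff.mp hcon)

lemma phi_mem_HU_one (x : FreeGroup α) : phi α x ∈ HU α 1 := by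
  have hsub : Set.range (fun i : α => U i) ⊆ ↑(HU α 1) := by
    rintro _ ⟨i, rfl⟩
    exact U_mem_HU_one i
  have h2 := FreeGroup.range_lift_le hsub
  exact h2 ⟨x, rfl⟩

lemma lcs_le_HU (k : ℕ) :
    (⊤ : Subgroup (FreeGroup α)).lowerCentralSeries k ≤ (HU α k).comap (phi α) := by
  induction k with
  | zero =>
    intro x _
    show phi α x ∈ HU α 0
    rw [mem_HU]
    intro w hw
    exact absurd hw (Nat.not_lt_zero _)
  | succ k ih =>
    show ⁅(⊤ : Subgroup (FreeGroup α)).lowerCentralSeries k, ⊤⁆ ≤ _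
    rw [Subgroup.commutator_le]
    intro g1 hg1 g2 _
    show phi α ⁅g1, g2⁆ ∈ HU α (k + 1)
    rw [map_commutatorElement]
    exact commutator_mem_HU (ih hg1) (phi_mem_HU_one g2)

lemma iInf_lcs_eq_bot : (⨅ k : ℕ, (⊤ : Subgroup (FreeGroup α)).lowerCentralSeries k) = ⊥ := by
  rw [eq_bot_iff]
  intro x hx
  rw [Subgroup.mem_iInf] at hx
  have hphi : ∀ k, phi α x ∈ HU α k := fun k => lcs_le_HU k (hx k)
  have hval : (↑(phi α x) : Mag α) = 1 := by
    funext w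
    have h := hphi (w.length + 1) w (by omega)
    rw [sub_apply] at h
    exact sub_eq_zero.mp h
  have hone : phi α x = 1 := Units.ext hval
  rw [Subgroup.mem_bot]
  exact phi_eq_one x hone

end Part2
end Mag
end MagnusAux

/-- The intersection of the derived series of a free group is trivial, and likewise
the intersection of its lower central series is trivial. -/
theorem free_group_derived_and_lcs_intersection_trivial (n : ℕ) :
    (⨅ k : ℕ, derivedSeries (FreeGroup (Fin n)) k) = ⊥ ∧
    (⨅ k : ℕ, (⊤ : Subgroup (FreeGroup (Fin n))).lowerCentralSeries k) = ⊥ := by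
  have h2 : (⨅ k : ℕ, (⊤ : Subgroup (FreeGroup (Fin n))).lowerCentralSeries k) = ⊥ :=
    MagnusAux.Mag.iInf_lcs_eq_bot
  refine ⟨?_, h2⟩
  rw [eq_bot_iff, ← h2]
  intro x hx
  rw [Subgroup.mem_iInf] at hx ⊢
  intro k
  exact Subgroup.derived_le_lower_central k (hx k)
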